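/- Assume that for all f with k ≤ deg f ≤ q-1, d(u_f, RS(q,k)) = q-k implies deg f = k (the deep hole conjecture for RS(q,k)). Then for q odd and 2 ≤ k ≤ q-2, the covering radius of PRS(q+1,k) equals q - k, and every word (u_f, v) with deg f = k and v ∈ F_q is a deep hole of PRS(q+1,k). -/

import Mathlib

open Polynomial

/-- Error distance of a word `u` to a code `C`: minimum Hamming distance to a codeword. -/
noncomputable def errDist {ι F : Type*} [Fintype ι] [DecidableEq F]
    (C : Set (ι → F)) (u : ι → F) : ℕ :=
  sInf (hammingDist u '' C)

/-- Covering radius of a code: maximum error distance over all words. -/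
noncomputable def covRad {ι F : Type*} [Fintype ι] [DecidableEq F]
    (C : Set (ι → F)) : ℕ :=
  sSup (Set.range (errDist C))

/-- Minimum distance of a code: minimum Hamming weight of a nonzero codeword. -/
noncomputable def minDist {ι F : Type*} [Fintype ι] [DecidableEq F] [Zero F]
    (C : Set (ι → F)) : ℕ :=
  sInf (hammingNorm '' (C \ {0}))

/-- Reed-Solomon code: evaluations of polynomials of degree `< k` at the points `x i`. -/
def RSCode (F : Type*) [Field F] {ι : Type*} (x : ι → F) (k : ℕ) : Set (ι → F) :=
  {u | ∃ f : F[X], f.degree < (k : WithBot ℕ) ∧ ∀ i, u i = f.eval (x i)}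

/-- Projective Reed-Solomon code of length `q+1` (words indexed by `Option F`,
with `none` the point at infinity carrying the coefficient of `X^(k-1)`). -/
def PRSCode (F : Type*) [Field F] (k : ℕ) : Set (Option F → F) :=
  {w | ∃ g : F[X], g.degree < (k : WithBot ℕ) ∧
    (∀ a : F, w (some a) = g.eval a) ∧ w none = g.coeff (k - 1)}


set_option linter.unusedSectionVars false
open Finset
section Helpers
variable {F : Type*} [Field F] [Fintype F] [DecidableEq F]


variable {F : Type*} [Field F] [Fintype F] [DecidableEq F]

lemma two_ne_zero_of_odd_card (hq : Odd (Fintype.card F)) : (2 : F) ≠ 0 := by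
  intro h
  have h2 : ringChar F ∣ 2 := by
    have : ((2 : ℕ) : F) = 0 := by exact_mod_cast h
    exact (CharP.cast_eq_zero_iff F (ringChar F) 2).mp this
  have hcard : ringChar F ∣ Fintype.card F :=
    (CharP.cast_eq_zero_iff F (ringChar F) _).mp (FiniteField.cast_card_eq_zero F)
  have h1 : ringChar F ≠ 1 := CharP.ringChar_ne_one
  have : ringChar F = 2 := by
    have := Nat.le_of_dvd (by norm_num) h2
    have h0 : ringChar F ≠ 0 := by rintro h0; rw [h0] at h2; norm_num at h2
    omega
  rw [this] at hcard
  rw [← Nat.not_even_iff_odd] at hq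
  exact hq (even_iff_two_dvd.mpr hcard)

lemma sum_univ_eq_zero (h2 : (2 : F) ≠ 0) : ∑ x : F, x = 0 := by
  have h : ∑ x : F, x = ∑ x : F, -x :=
    (Fintype.sum_equiv (Equiv.neg F) (fun x => -x) (fun x => x) (fun x => rfl)).symm
  have : (2 : F) * ∑ x : F, x = 0 := by
    rw [two_mul]
    calc (∑ x : F, x) + ∑ x : F, x = (∑ x : F, x) + ∑ x : F, -x := by rw [← h]
      _ = ∑ x : F, (x + -x) := (Finset.sum_add_distrib).symm
      _ = 0 := by simp
  rcases mul_eq_zero.mp this with h' | h'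
  · exact absurd h' h2
  · exact h'



lemma exists_not_mem_of_card_lt {B : Finset F} (h : B.card < Fintype.card F) :
    ∃ x : F, x ∉ B := by
  by_contra hall
  push_neg at hall
  have : (univ : Finset F) ⊆ B := fun x _ => hall x
  have := Finset.card_le_card this
  rw [Finset.card_univ] at this
  omega

lemma exists_subset_sum_avoid (h2 : (2 : F) ≠ 0) :
    ∀ k : ℕ, 2 ≤ k → ∀ A : Finset F, 2 * k + 2 * A.card ≤ Fintype.card F + 2 →
      ∀ s : F, ∃ T : Finset F, T.card = k ∧ (∀ x ∈ T, x ∉ A) ∧ ∑ x ∈ T, x = s := by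
  intro k hk2
  induction k, hk2 using Nat.le_induction with
  | base =>
    intro A hA s
    set B : Finset F := (A ∪ A.image (fun x => s - x)) ∪ {2⁻¹ * s} with hB
    have hBcard : B.card < Fintype.card F := by
      have h1 : B.card ≤ A.card + A.card + 1 := by
        refine le_trans (Finset.card_union_le _ _) ?_
        have := Finset.card_union_le A (A.image (fun x => s - x))
        have := Finset.card_image_le (s := A) (f := fun x => s - x)
        simp only [Finset.card_singleton]
        omega
      omega
    obtain ⟨x, hx⟩ := exists_not_mem_of_card_lt hBcard
    simp only [hB, Finset.mem_union, Finset.mem_image, Finset.mem_singleton, not_or,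
      not_exists] at hx
    obtain ⟨⟨hxA, hxim⟩, hxhalf⟩ := hx
    have hne : x ≠ s - x := by
      intro h
      apply hxhalf
      have : 2 * x = s := by
        have : x + x = (s - x) + x := by rw [← h]
        rw [two_mul]
        rw [this]; ring
      rw [← this]
      field_simp
    have hsxA : s - x ∉ A := by
      intro h
      exact hxim (s - x) ⟨h, by ring⟩
    refine ⟨{x, s - x}, ?_, ?_, ?_⟩
    · rw [Finset.card_insert_of_notMem (by simpa using hne), Finset.card_singleton]
    · intro y hy
      rcases Finset.mem_insert.mp hy with rfl | hy
      · exact hxA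
      · rw [Finset.mem_singleton] at hy; subst hy; exact hsxA
    · rw [Finset.sum_pair hne]; ring
  | succ n hn ih =>
    intro A hA s
    have hAcard : A.card < Fintype.card F := by omega
    obtain ⟨x, hxA⟩ := exists_not_mem_of_card_lt hAcard
    obtain ⟨T', hT'card, hT'avoid, hT'sum⟩ := ih (insert x A)
      (by have := Finset.card_insert_le x A; omega) (s - x)
    have hxT' : x ∉ T' := fun h => hT'avoid x h (Finset.mem_insert_self x A)
    refine ⟨insert x T', ?_, ?_, ?_⟩
    · rw [Finset.card_insert_of_notMem hxT', hT'card]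
    · intro y hy
      rcases Finset.mem_insert.mp hy with rfl | hy
      · exact hxA
      · exact fun h => hT'avoid y hy (Finset.mem_insert_of_mem h)
    · rw [Finset.sum_insert hxT', hT'sum]; ring

lemma exists_subset_sum (hq : Odd (Fintype.card F)) (h2 : (2 : F) ≠ 0) {k : ℕ} (hk2 : 2 ≤ k)
    (hk : k ≤ Fintype.card F - 2) (s : F) :
    ∃ T : Finset F, T.card = k ∧ ∑ x ∈ T, x = s := by
  have hq4 : k + 2 ≤ Fintype.card F := by omega
  by_cases hle : 2 * k ≤ Fintype.card F + 2
  · obtain ⟨T, h1, _, h3⟩ := exists_subset_sum_avoid h2 k hk2 ∅ (by simpa using hle) s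
    exact ⟨T, h1, h3⟩
  · push_neg at hle
    obtain ⟨T', h1, _, h3⟩ := exists_subset_sum_avoid h2 (Fintype.card F - k) (by omega) ∅
      (by simp only [Finset.card_empty]; omega) (-s)
    refine ⟨Finset.univ \ T', ?_, ?_⟩
    · rw [Finset.card_sdiff_of_subset (Finset.subset_univ _), Finset.card_univ, h1]
      omega
    · rw [Finset.sum_sdiff_eq_sub (Finset.subset_univ _), sum_univ_eq_zero h2, h3]; ring

end Helpers
section Ham
variable {ι β : Type*} [Fintype ι] [DecidableEq ι] [DecidableEq β]

lemma hammingDist_def (x y : ι → β) :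
    hammingDist x y = (Finset.univ.filter fun i => x i ≠ y i).card := rfl

lemma hammingDist_le_of_agree (x y : ι → β) (S : Finset ι) (h : ∀ i ∈ S, x i = y i) :
    hammingDist x y ≤ Fintype.card ι - S.card := by
  rw [hammingDist_def]
  have hsub : (Finset.univ.filter fun i => x i ≠ y i) ⊆ Finset.univ \ S := by
    intro i hi
    simp only [Finset.mem_filter, Finset.mem_sdiff, Finset.mem_univ, true_and] at *
    exact fun hiS => hi (h i hiS)
  calc (Finset.univ.filter fun i => x i ≠ y i).card ≤ (Finset.univ \ S).card :=
        Finset.card_le_card hsub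
    _ = Fintype.card ι - S.card := by
        rw [Finset.card_sdiff_of_subset (Finset.subset_univ _), Finset.card_univ]

lemma hammingDist_some_le {α : Type*} [Fintype α] [DecidableEq α] (x y : Option α → β) :
    hammingDist (fun a => x (some a)) (fun a => y (some a)) ≤ hammingDist x y := by
  rw [hammingDist_def, hammingDist_def]
  apply Finset.card_le_card_of_injOn some
  · intro a ha
    simp only [Finset.mem_coe, Finset.mem_filter, Finset.mem_univ, true_and] at *
    exact ha
  · intro a _ b _ h
    exact Option.some_injective _ h

lemma hammingDist_le_some_add_one {α : Type*} [Fintype α] [DecidableEq α] (x y : Option α → β) :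
    hammingDist x y ≤
      hammingDist (fun a => x (some a)) (fun a => y (some a)) + 1 := by
  rw [hammingDist_def, hammingDist_def]
  have hsub : (Finset.univ.filter fun o => x o ≠ y o) ⊆
      insert none ((Finset.univ.filter fun a => x (some a) ≠ y (some a)).map
        ⟨some, Option.some_injective _⟩) := by
    intro o ho
    match o with
    | none => exact Finset.mem_insert_self _ _
    | some a =>
      apply Finset.mem_insert_of_mem
      simp only [Finset.mem_filter, Finset.mem_univ, true_and] at ho
      simp only [Finset.mem_map, Finset.mem_filter, Finset.mem_univ, true_and,
        Function.Embedding.coeFn_mk]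
      exact ⟨a, ho, rfl⟩
  calc (Finset.univ.filter fun o => x o ≠ y o).card
      ≤ _ := Finset.card_le_card hsub
    _ ≤ _ + 1 := Finset.card_insert_le _ _
    _ = _ + 1 := by rw [Finset.card_map]

end Ham

section Err
variable {ι β : Type*} [Fintype ι] [DecidableEq β]

lemma errDist_le {C : Set (ι → β)} {u c : ι → β} (hc : c ∈ C) :
    errDist C u ≤ hammingDist u c :=
  Nat.sInf_le ⟨c, hc, rfl⟩

lemma le_errDist {C : Set (ι → β)} (hC : C.Nonempty) {n : ℕ} {u : ι → β}
    (h : ∀ c ∈ C, n ≤ hammingDist u c) : n ≤ errDist C u :=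
  le_csInf (hC.image _) (by rintro _ ⟨c, hc, rfl⟩; exact h c hc)

lemma exists_errDist {C : Set (ι → β)} (hC : C.Nonempty) (u : ι → β) :
    ∃ c ∈ C, hammingDist u c = errDist C u := by
  obtain ⟨c, hc, h⟩ := Nat.sInf_mem (hC.image (hammingDist u))
  exact ⟨c, hc, h⟩

end Err

section Poly
variable {F : Type*} [Field F] [Fintype F] [DecidableEq F]

lemma card_eval_eq_le {f g : F[X]} (hne : f ≠ g) {n : ℕ} (hdeg : (f - g).natDegree ≤ n) :
    (Finset.univ.filter fun a : F => f.eval a = g.eval a).card ≤ n := by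
  have hfg : f - g ≠ 0 := sub_ne_zero.mpr hne
  have hsub : (Finset.univ.filter fun a : F => f.eval a = g.eval a) ⊆
      (f - g).roots.toFinset := by
    intro a ha
    simp only [Finset.mem_filter, Finset.mem_univ, true_and] at ha
    rw [Multiset.mem_toFinset, mem_roots hfg]
    simp [IsRoot, ha]
  calc _ ≤ (f - g).roots.toFinset.card := Finset.card_le_card hsub
    _ ≤ Multiset.card (f - g).roots := Multiset.toFinset_card_le _
    _ ≤ (f - g).natDegree := (f - g).card_roots'
    _ ≤ n := hdeg

lemma dist_evals_ge {f g : F[X]} (hne : f ≠ g) {n : ℕ} (hdeg : (f - g).natDegree ≤ n) :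
    Fintype.card F - n ≤ hammingDist (fun a => f.eval a) (fun a => g.eval a) := by
  rw [hammingDist_def]
  have hsplit := Finset.card_filter_add_card_filter_not (s := (Finset.univ : Finset F))
    (p := fun a : F => f.eval a = g.eval a)
  have h1 := card_eval_eq_le hne hdeg
  rw [Finset.card_univ] at hsplit
  simp only [ne_eq] at *
  omega

end Poly

section Code
variable {F : Type*} [Field F] [Fintype F] [DecidableEq F] {k : ℕ}

variable {F : Type*} [Field F] [Fintype F] [DecidableEq F] {k : ℕ}

noncomputable def prsWord (g : F[X]) (k : ℕ) : Option F → F :=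
  fun o => o.elim (g.coeff (k - 1)) (fun a => g.eval a)

lemma prsWord_mem {g : F[X]} (hg : g.degree < (k : WithBot ℕ)) :
    prsWord g k ∈ PRSCode F k :=
  ⟨g, hg, fun _ => rfl, rfl⟩

lemma PRS_nonempty : (PRSCode F k).Nonempty :=
  ⟨prsWord 0 k, prsWord_mem (by rw [degree_zero]; exact WithBot.bot_lt_coe k)⟩

lemma RS_nonempty : (RSCode F (id : F → F) k).Nonempty :=
  ⟨fun a => (0 : F[X]).eval a,
    ⟨0, by rw [degree_zero]; exact WithBot.bot_lt_coe k, fun i => rfl⟩⟩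

/-- The key construction: a codeword polynomial agreeing with `f` (of degree `k`) at `k`
points and with prescribed coefficient `v` at `X^(k-1)`. -/
lemma deep_construction (hq : Odd (Fintype.card F)) (h2 : (2 : F) ≠ 0) (hk2 : 2 ≤ k)
    (hk : k ≤ Fintype.card F - 2) {f : F[X]} (hf : f.natDegree = k) (v : F) :
    ∃ g : F[X], g.degree < (k : WithBot ℕ) ∧ g.coeff (k - 1) = v ∧
      ∃ T : Finset F, T.card = k ∧ ∀ t ∈ T, g.eval t = f.eval t := by
  have hf0 : f ≠ 0 := by
    intro h
    rw [h, natDegree_zero] at hf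
    omega
  set c := f.leadingCoeff with hc
  have hc0 : c ≠ 0 := leadingCoeff_ne_zero.mpr hf0
  obtain ⟨T, hT1, hT2⟩ := exists_subset_sum hq h2 hk2 hk ((v - f.coeff (k - 1)) * c⁻¹)
  set P : F[X] := ∏ t ∈ T, (X - Polynomial.C t) with hP
  have hPmonic : P.Monic := monic_prod_of_monic _ _ (fun t _ => monic_X_sub_C t)
  have hP0 : P ≠ 0 := hPmonic.ne_zero
  have hPdeg : P.natDegree = k := by
    rw [hP, natDegree_prod _ _ (fun t _ => X_sub_C_ne_zero t)]
    simp [natDegree_X_sub_C, hT1]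
  have hPcoeff : P.coeff (k - 1) = -((v - f.coeff (k - 1)) * c⁻¹) := by
    have hcard : 0 < T.card := by omega
    have := prod_X_sub_C_coeff_card_pred T (fun t : F => t) hcard
    rw [hT1] at this
    rw [hP]
    rw [this, hT2]
  have hdegf : f.degree = (k : WithBot ℕ) := by
    rw [degree_eq_natDegree hf0, hf]
  have hdegCP : (Polynomial.C c * P).degree = (k : WithBot ℕ) := by
    rw [degree_C_mul hc0, degree_eq_natDegree hP0, hPdeg]
  have hlead : (Polynomial.C c * P).leadingCoeff = c := by
    rw [leadingCoeff_mul, leadingCoeff_C, hPmonic.leadingCoeff, mul_one]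
  refine ⟨f - Polynomial.C c * P, ?_, ?_, T, hT1, ?_⟩
  · have := degree_sub_lt (hdegf.trans hdegCP.symm) hf0 (by rw [hlead, hc])
    rwa [hdegf] at this
  · rw [coeff_sub, coeff_C_mul, hPcoeff]
    field_simp
    ring
  · intro t ht
    have hPt : P.eval t = 0 := by
      rw [hP, eval_prod]
      refine Finset.prod_eq_zero ht ?_
      simp
    rw [eval_sub, eval_mul, hPt, mul_zero, sub_zero]


/-- Upper bound for deep hole words. -/
lemma deep_errDist_le (hq : Odd (Fintype.card F)) (h2 : (2 : F) ≠ 0) (hk2 : 2 ≤ k)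
    (hk : k ≤ Fintype.card F - 2) {f : F[X]} (hf : f.natDegree = k) (v : F) :
    errDist (PRSCode F k) (fun o => o.elim v (fun a => f.eval a)) ≤ Fintype.card F - k := by
  obtain ⟨g, hg, hgc, T, hT1, hT2⟩ := deep_construction hq h2 hk2 hk hf v
  refine le_trans (errDist_le (prsWord_mem hg)) ?_
  have hagree := hammingDist_le_of_agree (fun o => o.elim v (fun a => f.eval a)) (prsWord g k)
    (insert none (T.map ⟨some, Option.some_injective _⟩)) ?_
  · have hcard : (insert none (T.map ⟨some, Option.some_injective F⟩)).card = k + 1 := by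
      rw [Finset.card_insert_of_notMem (by simp), Finset.card_map, hT1]
    rw [hcard, Fintype.card_option] at hagree
    refine le_trans hagree ?_
    omega
  · intro i hi
    rcases Finset.mem_insert.mp hi with rfl | hi
    · show v = g.coeff (k - 1)
      exact hgc.symm
    · obtain ⟨t, ht, rfl⟩ := Finset.mem_map.mp hi
      show f.eval t = g.eval t
      exact (hT2 t ht).symm

/-- Lower bound for deep hole words; does not need the conjecture. -/
lemma deep_errDist_ge (hk2 : 2 ≤ k) {f : F[X]} (hf : f.natDegree = k) (v : F) :
    Fintype.card F - k ≤
      errDist (PRSCode F k) (fun o => o.elim v (fun a => f.eval a)) := by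
  apply le_errDist PRS_nonempty
  rintro c ⟨g, hg, hgev, hgnone⟩
  have hf0 : f ≠ 0 := by
    intro h; rw [h, natDegree_zero] at hf; omega
  have hgk : g.natDegree ≤ k := natDegree_le_iff_degree_le.mpr (le_of_lt hg)
  have hfg : f ≠ g := by
    rintro rfl
    rw [degree_eq_natDegree hf0, hf] at hg
    exact absurd hg (lt_irrefl _)
  have h1 : Fintype.card F - k ≤ hammingDist (fun a => f.eval a) (fun a => g.eval a) :=
    dist_evals_ge hfg (le_trans (natDegree_sub_le f g) (by omega))
  have h2' := hammingDist_some_le (fun o => o.elim v (fun a => f.eval a)) c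
  have hc : (fun a => c (some a)) = (fun a => g.eval a) := funext hgev
  rw [hc] at h2'
  exact le_trans h1 h2'

/-- Upper bound on the error distance of any word to `RS(q,k)`. -/
lemma RS_errDist_le (hkq : k ≤ Fintype.card F) (u : F → F) :
    errDist (RSCode F (id : F → F) k) u ≤ Fintype.card F - k := by
  obtain ⟨T, _, hT⟩ := Finset.exists_subset_card_eq
    (s := (Finset.univ : Finset F)) (n := k) (by simpa using hkq)
  set g := Lagrange.interpolate T (id : F → F) u with hgdef
  have hinj : Set.InjOn (id : F → F) T := Function.injective_id.injOn
  have hmem : (fun a => g.eval a) ∈ RSCode F (id : F → F) k :=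
    ⟨g, by rw [← hT]; exact Lagrange.degree_interpolate_lt _ hinj, fun i => rfl⟩
  refine le_trans (errDist_le hmem) ?_
  have := hammingDist_le_of_agree u (fun a => g.eval a) T ?_
  · rwa [hT] at this
  · intro i hi
    exact (Lagrange.eval_interpolate_at_node u hinj hi).symm

/-- Upper bound on the error distance of any word to `PRS(q+1,k)`, assuming the conjecture. -/
lemma PRS_errDist_le (hq : Odd (Fintype.card F)) (h2 : (2 : F) ≠ 0) (hk2 : 2 ≤ k)
    (hk : k ≤ Fintype.card F - 2)
    (conj : ∀ f : F[X], k ≤ f.natDegree → f.natDegree ≤ Fintype.card F - 1 →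
      errDist (RSCode F (id : F → F) k) (fun a => f.eval a) = Fintype.card F - k →
        f.natDegree = k)
    (w : Option F → F) : errDist (PRSCode F k) w ≤ Fintype.card F - k := by
  have hq4 : k + 2 ≤ Fintype.card F := by omega
  set u : F → F := fun a => w (some a) with hu
  set h : F[X] := Lagrange.interpolate (Finset.univ : Finset F) (id : F → F) u with hh
  have hinj : Set.InjOn (id : F → F) (Finset.univ : Finset F) := Function.injective_id.injOn
  have hdeg : h.degree < (Fintype.card F : WithBot ℕ) := by
    have := Lagrange.degree_interpolate_lt u hinj
    rwa [Finset.card_univ] at this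
  have heval : ∀ a : F, h.eval a = u a := fun a =>
    Lagrange.eval_interpolate_at_node u hinj (Finset.mem_univ a)
  by_cases hcase : h.degree < (k : WithBot ℕ)
  · -- w is within distance 1 of the codeword from h
    refine le_trans (errDist_le (prsWord_mem hcase)) ?_
    have hag := hammingDist_le_of_agree w (prsWord h k)
      ((Finset.univ : Finset F).map ⟨some, Option.some_injective _⟩) ?_
    · rw [Finset.card_map, Finset.card_univ, Fintype.card_option] at hag
      refine le_trans hag ?_
      omega
    · intro i hi
      obtain ⟨a, _, rfl⟩ := Finset.mem_map.mp hi
      show w (some a) = h.eval a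
      rw [heval a]
  · push_neg at hcase
    have hh0 : h ≠ 0 := by
      intro h0
      rw [h0, degree_zero] at hcase
      exact absurd (lt_of_le_of_lt hcase (WithBot.bot_lt_coe k)) (lt_irrefl _)
    have hklow : k ≤ h.natDegree := by
      rw [degree_eq_natDegree hh0, Nat.cast_le] at hcase
      exact hcase
    have hkup : h.natDegree ≤ Fintype.card F - 1 := by
      have := (natDegree_lt_iff_degree_lt hh0).mpr hdeg
      omega
    have hRSle := RS_errDist_le (k := k) (by omega) (fun a => h.eval a)
    have hwh : w = fun o => o.elim (w none) (fun a => h.eval a) := by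
      funext o
      match o with
      | none => rfl
      | some a => exact (heval a).symm
    rcases lt_or_eq_of_le hRSle with hlt | heq
    · obtain ⟨cw, hcwmem, hcwd⟩ := exists_errDist RS_nonempty (fun a => h.eval a)
      obtain ⟨g, hg, hgev⟩ := hcwmem
      have hgev' : cw = fun a => g.eval a := funext (fun a => hgev a)
      refine le_trans (errDist_le (prsWord_mem hg)) ?_
      refine le_trans (hammingDist_le_some_add_one w (prsWord g k)) ?_
      have hsome : (fun a => w (some a)) = (fun a => h.eval a) := by
        funext a; rw [heval a]
      have hsome2 : (fun a => prsWord g k (some a)) = (fun a => g.eval a) := rfl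
      rw [hsome, hsome2, ← hgev', hcwd]
      omega
    · have hdk := conj h hklow hkup heq
      rw [hwh]
      exact deep_errDist_le hq h2 hk2 hk hdk (w none)

end Code

/-- Assuming the deep hole conjecture for `RS(q,k)`, the covering radius of `PRS(q+1,k)`
equals `q - k`, and every word `(u_f, v)` with `deg f = k` is a deep hole of `PRS(q+1,k)`. -/
theorem prs_covRad_of_deephole_conj {F : Type*} [Field F] [Fintype F] [DecidableEq F] {k : ℕ}
    (hq : Odd (Fintype.card F)) (hk2 : 2 ≤ k) (hk : k ≤ Fintype.card F - 2)
    (conj : ∀ f : F[X], k ≤ f.natDegree → f.natDegree ≤ Fintype.card F - 1 →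
      errDist (RSCode F (id : F → F) k) (fun a => f.eval a) = Fintype.card F - k →
        f.natDegree = k) :
    covRad (PRSCode F k) = Fintype.card F - k ∧
      ∀ f : F[X], f.natDegree = k → ∀ v : F,
        errDist (PRSCode F k) (fun o => o.elim v (fun a => f.eval a)) =
          covRad (PRSCode F k) := by
  have h2 : (2 : F) ≠ 0 := two_ne_zero_of_odd_card hq
  have hdeep : ∀ f : F[X], f.natDegree = k → ∀ v : F,
      errDist (PRSCode F k) (fun o => o.elim v (fun a => f.eval a)) = Fintype.card F - k :=
    fun f hf v => le_antisymm (deep_errDist_le hq h2 hk2 hk hf v) (deep_errDist_ge hk2 hf v)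
  have hub : ∀ w : Option F → F, errDist (PRSCode F k) w ≤ Fintype.card F - k :=
    PRS_errDist_le hq h2 hk2 hk conj
  have hcov : covRad (PRSCode F k) = Fintype.card F - k := by
    apply le_antisymm
    · exact csSup_le (Set.range_nonempty _) (by rintro n ⟨w, rfl⟩; exact hub w)
    · apply le_csSup
      · exact ⟨Fintype.card F - k, by rintro n ⟨w, rfl⟩; exact hub w⟩
      · exact ⟨fun o => o.elim 0 (fun a => (X ^ k : F[X]).eval a),
          hdeep (X ^ k) (natDegree_X_pow k) 0⟩
  exact ⟨hcov, fun f hf v => by rw [hcov, hdeep f hf v]⟩
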